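/- The quotient group N'/F^* is a dihedral group of order 2(q+1). -/

import Mathlib

open Matrix CategoryTheory CategoryTheory.Limits Pointwise
open scoped LinearAlgebra.Projectivization

noncomputable section

/-- The projective line over a field `K`, as the projectivization of `K²`. -/
abbrev P1 (K : Type*) [Field K] := ℙ K (Fin 2 → K)

namespace P1

variable {K : Type*} [Field K]

lemma mulVec_ne_zero (g : GL (Fin 2) K) {v : Fin 2 → K} (hv : v ≠ 0) :
    (g : Matrix (Fin 2) (Fin 2) K) *ᵥ v ≠ 0 := by
  intro h
  apply hv
  have h2 := congrArg (fun w => ((g⁻¹ : GL (Fin 2) K) : Matrix (Fin 2) (Fin 2) K) *ᵥ w) h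
  simp only [Matrix.mulVec_mulVec] at h2
  rw [Units.inv_mul, Matrix.one_mulVec, Matrix.mulVec_zero] at h2
  exact h2

/-- The natural action of `GL₂(K)` on the projective line `ℙ¹(K)`. -/
instance : SMul (GL (Fin 2) K) (P1 K) :=
  ⟨fun g x => Projectivization.mk K ((g : Matrix (Fin 2) (Fin 2) K) *ᵥ x.rep)
    (mulVec_ne_zero g x.rep_nonzero)⟩

lemma smul_mk (g : GL (Fin 2) K) (v : Fin 2 → K) (hv : v ≠ 0) :
    g • Projectivization.mk K v hv
      = Projectivization.mk K ((g : Matrix (Fin 2) (Fin 2) K) *ᵥ v) (mulVec_ne_zero g hv) := by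
  show Projectivization.mk K _ _ = _
  rw [Projectivization.mk_eq_mk_iff]
  obtain ⟨a, ha⟩ := Projectivization.exists_smul_eq_mk_rep K v hv
  exact ⟨a, by rw [← ha]; simp [Matrix.mulVec_smul]⟩

instance : MulAction (GL (Fin 2) K) (P1 K) where
  one_smul x := by
    induction x using Projectivization.ind with
    | h v hv => rw [smul_mk]; simp
  mul_smul g h x := by
    induction x using Projectivization.ind with
    | h v hv => rw [smul_mk, smul_mk, smul_mk]; simp only [Units.val_mul, Matrix.mulVec_mulVec]

end P1

section Setup

variable (F : Type*) [Field F] (F' : Type*) [Field F'] [Algebra F F']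

/-- The inclusion `GL₂(F) → GL₂(F')` induced by the inclusion `F ⊆ F'`. -/
def glMap : GL (Fin 2) F →* GL (Fin 2) F' :=
  Matrix.GeneralLinearGroup.map (algebraMap F F')

/-- The scalar matrices, as a homomorphism `Fˣ →* GL₂(F)`. -/
def scalarGL : Fˣ →* GL (Fin 2) F :=
  Units.map (Matrix.scalar (Fin 2)).toMonoidHom

variable {F F'}

/-- The (semilinear) action of a field automorphism `σ ∈ Gal(F'/F)` on `ℙ¹(F')`. -/
def sigmaPt (σ : F' ≃ₐ[F] F') (x : P1 F') : P1 F' :=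
  Projectivization.mk F' (fun i => σ (x.rep i))
    (fun h => x.rep_nonzero (funext fun i => σ.injective (by simpa using congrFun h i)))

variable (F F')

/-- The set of `F`-rational points `ℙ¹(F) ⊆ ℙ¹(F')`. -/
def ratPts : Set (P1 F') :=
  Set.range (fun x : P1 F =>
    Projectivization.mk F' (fun i => algebraMap F F' (x.rep i))
      (fun h => x.rep_nonzero (funext fun i =>
        (algebraMap F F').injective (by simpa using congrFun h i))))

/-- A Borel subgroup of `GL₂(F)`: the stabilizer of a point `∞ ∈ ℙ¹(F)`. -/
def Bsub (xoo : P1 F) : Subgroup (GL (Fin 2) F) :=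
  MulAction.stabilizer (GL (Fin 2) F) xoo

/-- A split maximal torus of `GL₂(F)`: the pointwise stabilizer of `{0, ∞} ⊆ ℙ¹(F)`. -/
def Tsub (x0 xoo : P1 F) : Subgroup (GL (Fin 2) F) :=
  MulAction.stabilizer (GL (Fin 2) F) x0 ⊓ MulAction.stabilizer (GL (Fin 2) F) xoo

/-- The setwise stabilizer of `{0, ∞} ⊆ ℙ¹(F)` in `GL₂(F)`. -/
def Nsub (x0 xoo : P1 F) : Subgroup (GL (Fin 2) F) :=
  MulAction.stabilizer (GL (Fin 2) F) ({x0, xoo} : Set (P1 F))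

/-- A nonsplit maximal torus of `GL₂(F)`: the stabilizer in `GL₂(F)` of a point
`P ∈ ℙ¹(F') ∖ ℙ¹(F)`. -/
def T'sub (P : P1 F') : Subgroup (GL (Fin 2) F) :=
  (MulAction.stabilizer (GL (Fin 2) F') P).comap (glMap F F')

/-- The setwise stabilizer in `GL₂(F)` of the pair `{P, σP}`, for `P ∈ ℙ¹(F') ∖ ℙ¹(F)`. -/
def N'sub (σ : F' ≃ₐ[F] F') (P : P1 F') : Subgroup (GL (Fin 2) F) :=
  (MulAction.stabilizer (GL (Fin 2) F') ({P, sigmaPt σ P} : Set (P1 F'))).comap (glMap F F')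

end Setup

/-- The subgroup `F^*` of scalar matrices in `GL₂(F)`. -/
def scalarSub (F : Type*) [Field F] : Subgroup (GL (Fin 2) F) := (scalarGL F).range

lemma scalarGL_comm (F : Type*) [Field F] (c : Fˣ) (g : GL (Fin 2) F) :
    g * scalarGL F c = scalarGL F c * g := by
  refine Units.ext ?_
  simp only [Units.val_mul]
  exact (Matrix.scalar_commute (c : F) (fun r => Commute.all _ r)
    (g : Matrix (Fin 2) (Fin 2) F)).symm

lemma scalarSub_normal (F : Type*) [Field F] : (scalarSub F).Normal := by
  constructor
  intro n hn g
  obtain ⟨c, rfl⟩ := hn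
  refine ⟨c, ?_⟩
  rw [scalarGL_comm F c g, mul_assoc, mul_inv_cancel, mul_one]

instance scalarSub_subgroupOf_normal {F : Type*} [Field F] {F' : Type*} [Field F']
    [Algebra F F'] (σ : F' ≃ₐ[F] F') (P : P1 F') :
    ((scalarSub F).subgroupOf (N'sub F F' σ P)).Normal :=
  (scalarSub_normal F).subgroupOf _

namespace Statement14Aux

variable {F : Type*} [Field F] {F' : Type*} [Field F'] [Algebra F F']

/-- The transpose of the matrix of an `F`-endomorphism of `F'` in the basis `B`. -/
def TT (B : Module.Basis (Fin 2) F F') (f : F' →ₗ[F] F') : Matrix (Fin 2) (Fin 2) F :=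
  (LinearMap.toMatrix B B f)ᵀ

lemma TT_comp (B : Module.Basis (Fin 2) F F') (f g : F' →ₗ[F] F') :
    TT B (f ∘ₗ g) = TT B g * TT B f := by
  simp [TT, LinearMap.toMatrix_comp B B B f g, Matrix.transpose_mul]

lemma TT_id (B : Module.Basis (Fin 2) F F') : TT B LinearMap.id = 1 := by
  simp [TT, LinearMap.toMatrix_id]

lemma TT_mulVec (B : Module.Basis (Fin 2) F F') (f : F' →ₗ[F] F') :
    ((TT B f).map (algebraMap F F')) *ᵥ (fun j => B j) = fun i => f (B i) := by
  funext i
  have h := B.sum_repr (f (B i))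
  simp only [Matrix.mulVec, dotProduct, Matrix.map_apply, TT, Matrix.transpose_apply,
    LinearMap.toMatrix_apply]
  conv_rhs => rw [← h]
  exact Finset.sum_congr rfl fun j _ => (Algebra.smul_def _ _).symm

/-- The element of `GL₂(F)` attached to an `F`-linear automorphism of `F'`. -/
def TTe (B : Module.Basis (Fin 2) F F') (e : F' ≃ₗ[F] F') : GL (Fin 2) F where
  val := TT B e.toLinearMap
  inv := TT B e.symm.toLinearMap
  val_inv := by
    rw [← TT_comp, ← TT_id (B := B)]
    ext x
    simp
  inv_val := by
    rw [← TT_comp, ← TT_id (B := B)]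
    ext x
    simp

lemma basis_fun_ne_zero (B : Module.Basis (Fin 2) F F') : (fun j => (B j : F')) ≠ 0 := by
  intro h
  exact B.ne_zero 0 (congrFun h 0)

lemma comp_basis_ne_zero (B : Module.Basis (Fin 2) F F') (e : F' ≃ₗ[F] F') :
    (fun i => e (B i)) ≠ 0 := by
  intro h
  apply B.ne_zero 0
  have := congrFun h 0
  simpa using e.injective (by simpa using this)

lemma glMap_coe (g : GL (Fin 2) F) :
    ((glMap F F' g : GL (Fin 2) F') : Matrix (Fin 2) (Fin 2) F') =
      (g : Matrix (Fin 2) (Fin 2) F).map (algebraMap F F') := by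
  rfl

lemma TTe_smul (B : Module.Basis (Fin 2) F F') (e : F' ≃ₗ[F] F') :
    glMap F F' (TTe B e) • Projectivization.mk F' (fun j => (B j : F')) (basis_fun_ne_zero B)
      = Projectivization.mk F' (fun i => e (B i)) (comp_basis_ne_zero B e) := by
  rw [P1.smul_mk]
  congr 1
  rw [glMap_coe]
  exact TT_mulVec B e.toLinearMap

end Statement14Aux
namespace Statement14Aux

variable {F : Type*} [Field F] {F' : Type*} [Field F'] [Algebra F F']

/-- Multiplication by a unit of `F'`, as an `F`-linear automorphism of `F'`. -/
def mulE (x : F'ˣ) : F' ≃ₗ[F] F' :=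
  LinearEquiv.ofLinear (LinearMap.mulLeft F (x : F')) (LinearMap.mulLeft F ((x⁻¹ : F'ˣ) : F'))
    (by ext y; simp [← mul_assoc]) (by ext y; simp [← mul_assoc])

@[simp] lemma mulE_apply (x : F'ˣ) (y : F') : mulE (F := F) x y = (x : F') * y := rfl

/-- The embedding `F'ˣ →* GL₂(F)` given by multiplication in the basis `B`. -/
def iota (B : Module.Basis (Fin 2) F F') : F'ˣ →* GL (Fin 2) F where
  toFun x := TTe B (mulE x)
  map_one' := by
    refine Units.ext ?_
    show TT B (mulE (F := F) (1 : F'ˣ)).toLinearMap = 1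
    have h1 : (mulE (F := F) (1 : F'ˣ)).toLinearMap = LinearMap.id :=
      LinearMap.ext fun y => by simp [mulE]
    rw [h1, TT_id]
  map_mul' x y := by
    refine Units.ext ?_
    show TT B (mulE (F := F) (x * y)).toLinearMap = _
    have : (mulE (F := F) (x * y)).toLinearMap
        = (mulE (F := F) y).toLinearMap ∘ₗ (mulE (F := F) x).toLinearMap := by
      ext z
      simp [mul_assoc, mul_left_comm, mul_comm]
    rw [this, TT_comp]
    rfl

lemma iota_val (B : Module.Basis (Fin 2) F F') (x : F'ˣ) :
    (iota B x : Matrix (Fin 2) (Fin 2) F) = TT B (mulE (F := F) x).toLinearMap := rfl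

lemma iota_smul (B : Module.Basis (Fin 2) F F') (x : F'ˣ) :
    glMap F F' (iota B x) • Projectivization.mk F' (fun j => (B j : F')) (basis_fun_ne_zero B)
      = Projectivization.mk F' (fun j => (B j : F')) (basis_fun_ne_zero B) := by
  rw [show iota B x = TTe B (mulE (F := F) x) from rfl, TTe_smul]
  rw [Projectivization.mk_eq_mk_iff]
  exact ⟨x, rfl⟩

lemma sigmaPt_mk (σ : F' ≃ₐ[F] F') (v : Fin 2 → F') (hv : v ≠ 0)
    (h2 : (fun i => σ (v i)) ≠ 0) :
    sigmaPt σ (Projectivization.mk F' v hv) = Projectivization.mk F' (fun i => σ (v i)) h2 := by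
  unfold sigmaPt
  rw [Projectivization.mk_eq_mk_iff]
  obtain ⟨a, ha⟩ := Projectivization.exists_smul_eq_mk_rep F' v hv
  refine ⟨Units.map (σ : F' →+* F').toMonoidHom a, ?_⟩
  funext i
  have h := congrFun ha i
  simp only [Pi.smul_apply, Units.smul_def, smul_eq_mul] at h ⊢
  rw [← h, _root_.map_mul σ]
  simp [Units.coe_map]

end Statement14Aux
namespace Statement14Aux

variable {F : Type*} [Field F] {F' : Type*} [Field F'] [Algebra F F']

lemma repr_expand (B : Module.Basis (Fin 2) F F') (x : F') :
    x = algebraMap F F' (B.repr x 0) * B 0 + algebraMap F F' (B.repr x 1) * B 1 := by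
  conv_lhs => rw [← B.sum_repr x]
  rw [Fin.sum_univ_two]
  simp [Algebra.smul_def]

section Sigma

variable (B : Module.Basis (Fin 2) F F') (σ : F' ≃ₐ[F] F') (hB1 : B 1 = 1)

include hB1

lemma sigma_ne_of_ne (hσ : σ ≠ AlgEquiv.refl) : σ (B 0) ≠ B 0 := by
  intro h
  apply hσ
  have h1 : σ (B 1) = B 1 := by rw [hB1]; exact map_one σ
  have hlin : σ.toLinearMap = LinearMap.id := by
    apply B.ext
    intro i
    fin_cases i <;> simpa
  ext x
  simpa using LinearMap.congr_fun hlin x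

lemma sigma_B0 (hne : σ (B 0) ≠ B 0) :
    σ (B 0) = algebraMap F F' (B.repr (B 0 * B 0) 0) - B 0 := by
  have hα : B 0 * B 0 = algebraMap F F' (B.repr (B 0 * B 0) 0) * B 0
      + algebraMap F F' (B.repr (B 0 * B 0) 1) * B 1 := repr_expand B _
  have hγ := congrArg σ hα
  simp only [map_add, _root_.map_mul, AlgEquiv.commutes] at hγ
  rw [hB1, _root_.map_one σ, mul_one] at hγ
  rw [hB1, mul_one] at hα
  have key : (σ (B 0) + B 0 - algebraMap F F' (B.repr (B 0 * B 0) 0)) * (σ (B 0) - B 0) = 0 := by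
    linear_combination hγ - hα
  rcases mul_eq_zero.1 key with h | h
  · linear_combination h
  · exact absurd (sub_eq_zero.1 h) hne

lemma sigma_sigma (hne : σ (B 0) ≠ B 0) (x : F') : σ (σ x) = x := by
  have h0 := sigma_B0 B σ hB1 hne
  have hfix : σ (σ (B 0)) = B 0 := by
    rw [h0, map_sub, AlgEquiv.commutes, h0]
    ring
  have h1 : σ (σ (B 1)) = B 1 := by rw [hB1]; simp
  have hlin : σ.toLinearMap ∘ₗ σ.toLinearMap = LinearMap.id := by
    apply B.ext
    intro i
    fin_cases i <;> simpa
  simpa using LinearMap.congr_fun hlin x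

lemma fixed_mem (hne : σ (B 0) ≠ B 0) {x : F'} (hx : σ x = x) :
    x ∈ Set.range (algebraMap F F') := by
  have hexp := repr_expand B x
  rw [hB1, mul_one] at hexp
  have h2 := congrArg σ hexp
  simp only [map_add, _root_.map_mul, AlgEquiv.commutes] at h2
  rw [hx] at h2
  have h3 : algebraMap F F' (B.repr x 0) * (σ (B 0) - B 0) = 0 := by
    linear_combination hexp - h2
  rcases mul_eq_zero.1 h3 with h | h
  · refine ⟨B.repr x 1, ?_⟩
    conv_rhs => rw [hexp, h]
    rw [zero_mul, zero_add]
  · exact absurd (sub_eq_zero.1 h) hne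

end Sigma

end Statement14Aux
namespace Statement14Aux

variable {F : Type*} [Field F] {F' : Type*} [Field F'] [Algebra F F']

section SU

variable (B : Module.Basis (Fin 2) F F') (σ : F' ≃ₐ[F] F')

/-- The element of `GL₂(F)` given by `σ` in the basis `B`. -/
def sU : GL (Fin 2) F := TTe B σ.toLinearEquiv

lemma sU_smul :
    glMap F F' (sU B σ) • Projectivization.mk F' (fun j => (B j : F')) (basis_fun_ne_zero B)
      = Projectivization.mk F' (fun i => σ (B i))
          (comp_basis_ne_zero B σ.toLinearEquiv) :=
  TTe_smul B σ.toLinearEquiv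

lemma sU_sq (hss : ∀ x, σ (σ x) = x) : sU B σ * sU B σ = 1 := by
  refine Units.ext ?_
  show TT B σ.toLinearEquiv.toLinearMap * TT B σ.toLinearEquiv.toLinearMap = 1
  rw [← TT_comp, show (σ.toLinearEquiv.toLinearMap ∘ₗ σ.toLinearEquiv.toLinearMap)
    = LinearMap.id from LinearMap.ext fun z => hss z, TT_id]

lemma sU_conj (hss : ∀ x, σ (σ x) = x) (x : F'ˣ) :
    sU B σ * iota B x * sU B σ = iota B (Units.map (σ : F' →+* F').toMonoidHom x) := by
  refine Units.ext ?_
  show TT B σ.toLinearEquiv.toLinearMap * TT B (mulE (F := F) x).toLinearMap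
      * TT B σ.toLinearEquiv.toLinearMap
    = TT B (mulE (F := F) (Units.map (σ : F' →+* F').toMonoidHom x)).toLinearMap
  rw [← TT_comp, ← TT_comp]
  have hcomp : σ.toLinearEquiv.toLinearMap ∘ₗ ((mulE (F := F) x).toLinearMap
        ∘ₗ σ.toLinearEquiv.toLinearMap)
      = (mulE (F := F) (Units.map (σ : F' →+* F').toMonoidHom x)).toLinearMap := by
    refine LinearMap.ext fun z => ?_
    simp only [LinearMap.comp_apply, LinearEquiv.coe_coe, AlgEquiv.toLinearEquiv_apply,
      mulE_apply, _root_.map_mul, hss, Units.coe_map, RingHom.toMonoidHom_eq_coe,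
      MonoidHom.coe_coe, RingHom.coe_coe]
  exact congrArg (TT B) hcomp

end SU

section Scalar

variable (B : Module.Basis (Fin 2) F F') (hB1 : B 1 = 1)

lemma iota_algebraMap (c : Fˣ) :
    iota B (Units.map (algebraMap F F').toMonoidHom c) = scalarGL F c := by
  refine Units.ext ?_
  show TT B (mulE (F := F) (Units.map (algebraMap F F').toMonoidHom c)).toLinearMap
      = Matrix.scalar (Fin 2) (c : F)
  have h1 : (mulE (F := F) (Units.map (algebraMap F F').toMonoidHom c)).toLinearMap
      = (c : F) • LinearMap.id := by
    refine LinearMap.ext fun z => ?_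
    simp [mulE, Algebra.smul_def]
  rw [TT, h1, _root_.map_smul, LinearMap.toMatrix_id, Matrix.transpose_smul, Matrix.transpose_one,
    Matrix.smul_one_eq_diagonal, Matrix.scalar_apply]

include hB1

lemma iota_mem_scalar_iff (x : F'ˣ) :
    iota B x ∈ scalarSub F ↔ (x : F') ∈ Set.range (algebraMap F F') := by
  constructor
  · rintro ⟨c, hc⟩
    have hval : Matrix.scalar (Fin 2) (c : F) = TT B (mulE (F := F) x).toLinearMap :=
      congrArg Units.val hc
    have h2 : ((Matrix.scalar (Fin 2) (c : F)).map (algebraMap F F') *ᵥ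
          (fun j => (B j : F'))) 1
        = ((TT B (mulE (F := F) x).toLinearMap).map (algebraMap F F') *ᵥ
          (fun j => (B j : F'))) 1 := by rw [hval]
    rw [TT_mulVec] at h2
    have h3 : ((Matrix.scalar (Fin 2) (c : F)).map (algebraMap F F') *ᵥ
        (fun j => (B j : F'))) 1 = algebraMap F F' (c : F) * B 1 := by
      simp [Matrix.mulVec, dotProduct, Fin.sum_univ_two, Matrix.scalar_apply,
        Matrix.diagonal]
    rw [h3, hB1, mul_one] at h2
    refine ⟨c, ?_⟩
    rw [h2]
    simp [mulE, hB1]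
  · rintro ⟨d, hd⟩
    have hd0 : d ≠ 0 := by
      rintro rfl
      exact x.ne_zero (by simp [← hd])
    refine ⟨Units.mk0 d hd0, ?_⟩
    rw [← iota_algebraMap B]
    congr 1
    refine Units.ext ?_
    simpa using hd

end Scalar

end Statement14Aux
namespace Statement14Aux

variable {F : Type*} [Field F] {F' : Type*} [Field F'] [Algebra F F']

lemma mem_ratPts (u : Fin 2 → F) (hu : u ≠ 0)
    (h2 : (fun i => algebraMap F F' (u i)) ≠ 0) :
    Projectivization.mk F' (fun i => algebraMap F F' (u i)) h2 ∈ ratPts F F' := by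
  refine ⟨Projectivization.mk F u hu, ?_⟩
  obtain ⟨a, ha⟩ := Projectivization.exists_smul_eq_mk_rep F u hu
  rw [Projectivization.mk_eq_mk_iff]
  refine ⟨Units.map (algebraMap F F').toMonoidHom a, ?_⟩
  funext i
  have h := congrFun ha i
  simp only [Pi.smul_apply, Units.smul_def, smul_eq_mul] at h ⊢
  rw [← h, _root_.map_mul]
  simp

lemma exists_basis (hdim : Module.finrank F F' = 2) (P : P1 F') (hP : P ∉ ratPts F F') :
    ∃ B : Module.Basis (Fin 2) F F', B 1 = 1 ∧ B 0 ∉ Set.range (algebraMap F F') ∧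
      P = Projectivization.mk F' (fun j => (B j : F')) (basis_fun_ne_zero B) := by
  set v := P.rep with hvdef
  have hv : v ≠ 0 := P.rep_nonzero
  have hmk : Projectivization.mk F' v hv = P := Projectivization.mk_rep P
  by_cases hv1 : v 1 = 0
  · exfalso
    apply hP
    have hv0 : v 0 ≠ 0 := by
      intro h0
      apply hv
      funext i
      fin_cases i
      · exact h0
      · exact hv1
    have h2 : (fun i => algebraMap F F' ((![1, 0] : Fin 2 → F) i)) ≠ 0 := by
      intro h
      have := congrFun h 0
      simp at this
    have : P = Projectivization.mk F' (fun i => algebraMap F F' ((![1, 0] : Fin 2 → F) i)) h2 := by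
      rw [← hmk, Projectivization.mk_eq_mk_iff]
      refine ⟨Units.mk0 (v 0) hv0, ?_⟩
      funext i
      fin_cases i <;> simp [hv1]
    rw [this]
    exact mem_ratPts _ (by intro h; simpa using congrFun h 0) h2
  · set α := v 0 * (v 1)⁻¹ with hα
    have hwv : Projectivization.mk F' v hv
        = Projectivization.mk F' ![α, 1] (by
            intro h
            simpa using congrFun h 1) := by
      rw [Projectivization.mk_eq_mk_iff]
      refine ⟨Units.mk0 (v 1) hv1, ?_⟩
      funext i
      fin_cases i <;>
        simp [hα, Units.smul_def, smul_eq_mul]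
      rw [mul_comm (v 0) (v 1)⁻¹, ← mul_assoc, mul_inv_cancel₀ hv1, one_mul]
    have hαr : α ∉ Set.range (algebraMap F F') := by
      rintro ⟨c, hc⟩
      apply hP
      have h2 : (fun i => algebraMap F F' ((![c, 1] : Fin 2 → F) i)) ≠ 0 := by
        intro h
        simpa using congrFun h 1
      have : P = Projectivization.mk F' (fun i => algebraMap F F' ((![c, 1] : Fin 2 → F) i)) h2 := by
        rw [← hmk, hwv, Projectivization.mk_eq_mk_iff]
        refine ⟨1, ?_⟩
        funext i
        fin_cases i <;> simp [← hc]
      rw [this]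
      exact mem_ratPts _ (by intro h; simpa using congrFun h 1) h2
    have hli : LinearIndependent F ![α, (1 : F')] := by
      rw [linearIndependent_fin2]
      refine ⟨by simp, fun a ha => ?_⟩
      simp only [Matrix.cons_val_one, Matrix.head_cons, Matrix.cons_val_zero] at ha
      exact hαr ⟨a, by rw [← ha, Algebra.smul_def, mul_one]⟩
    have hcard : Fintype.card (Fin 2) = Module.finrank F F' := by simp [hdim]
    refine ⟨basisOfLinearIndependentOfCardEqFinrank hli hcard, ?_, ?_, ?_⟩
    · rw [coe_basisOfLinearIndependentOfCardEqFinrank]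
      simp
    · rw [coe_basisOfLinearIndependentOfCardEqFinrank]
      simpa using hαr
    · rw [← hmk, hwv, Projectivization.mk_eq_mk_iff]
      refine ⟨1, ?_⟩
      funext i
      rw [coe_basisOfLinearIndependentOfCardEqFinrank]
      fin_cases i <;> simp

end Statement14Aux
namespace Statement14Aux

variable {F : Type*} [Field F] {F' : Type*} [Field F'] [Algebra F F']

lemma glMap_mulVec_sigma (σ : F' ≃ₐ[F] F') (g : GL (Fin 2) F) (v : Fin 2 → F') :
    ((glMap F F' g : Matrix (Fin 2) (Fin 2) F') *ᵥ (fun i => σ (v i)))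
      = fun i => σ (((glMap F F' g : Matrix (Fin 2) (Fin 2) F') *ᵥ v) i) := by
  funext i
  simp only [glMap_coe, Matrix.mulVec, dotProduct, Matrix.map_apply]
  rw [map_sum]
  refine Finset.sum_congr rfl fun j _ => ?_
  rw [_root_.map_mul, AlgEquiv.commutes]

lemma smul_sigma_comm (σ : F' ≃ₐ[F] F') (g : GL (Fin 2) F) (v v' : Fin 2 → F')
    (hv : v ≠ 0) (hv' : v' ≠ 0) (hsv : (fun i => σ (v i)) ≠ 0) (hsv' : (fun i => σ (v' i)) ≠ 0)
    (h : glMap F F' g • Projectivization.mk F' v hv = Projectivization.mk F' v' hv') :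
    glMap F F' g • Projectivization.mk F' (fun i => σ (v i)) hsv
      = Projectivization.mk F' (fun i => σ (v' i)) hsv' := by
  rw [P1.smul_mk] at h ⊢
  rw [Projectivization.mk_eq_mk_iff] at h ⊢
  obtain ⟨a, ha⟩ := h
  refine ⟨Units.map (σ : F' →+* F').toMonoidHom a, ?_⟩
  funext i
  have h1 := congrFun ha i
  simp only [Pi.smul_apply, Units.smul_def, smul_eq_mul] at h1 ⊢
  rw [glMap_mulVec_sigma σ g v]
  simp only [Units.coe_map, RingHom.toMonoidHom_eq_coe, MonoidHom.coe_coe, RingHom.coe_coe]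
  rw [← h1, _root_.map_mul σ]

section Points

variable (B : Module.Basis (Fin 2) F F') (σ : F' ≃ₐ[F] F') (hB1 : B 1 = 1)
  (hne : σ (B 0) ≠ B 0)

lemma sigma_basis_ne_zero : (fun i => σ ((fun j => (B j : F')) i)) ≠ 0 := by
  intro h
  have := congrFun h 1
  simp only [Pi.zero_apply] at this
  exact B.ne_zero 1 (σ.injective (by simpa using this))

/-- `P₀` is the point of the projective line determined by the basis. -/
def P0 : P1 F' := Projectivization.mk F' (fun j => (B j : F')) (basis_fun_ne_zero B)

/-- `Q₀ = σ P₀`. -/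
def Q0 : P1 F' :=
  Projectivization.mk F' (fun i => σ ((fun j => (B j : F')) i)) (sigma_basis_ne_zero B σ)

lemma sigmaPt_P0 : sigmaPt σ (P0 B) = Q0 B σ := sigmaPt_mk σ _ _ _

include hB1 hne in
lemma P0_ne_Q0 : P0 B ≠ Q0 B σ := by
  intro h
  rw [P0, Q0, Projectivization.mk_eq_mk_iff] at h
  obtain ⟨a, ha⟩ := h
  have h1 := congrFun ha 1
  have h0 := congrFun ha 0
  simp only [Pi.smul_apply, Units.smul_def, smul_eq_mul] at h1 h0
  rw [hB1, _root_.map_one σ, mul_one] at h1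
  rw [h1] at h0
  simp only [one_mul] at h0
  exact hne h0

lemma smul_pair_eq (g : GL (Fin 2) F') (x y : P1 F') :
    g • ({x, y} : Set (P1 F')) = {g • x, g • y} := by
  rw [Set.smul_set_insert, Set.smul_set_singleton]

lemma mem_N'_iff (g : GL (Fin 2) F) :
    g ∈ N'sub F F' σ (P0 B)
      ↔ (glMap F F' g • P0 B = P0 B ∧ glMap F F' g • Q0 B σ = Q0 B σ)
        ∨ (glMap F F' g • P0 B = Q0 B σ ∧ glMap F F' g • Q0 B σ = P0 B) := by
  rw [N'sub, Subgroup.mem_comap, MulAction.mem_stabilizer_iff, sigmaPt_P0, smul_pair_eq,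
    Set.pair_eq_pair_iff]

end Points

end Statement14Aux
namespace Statement14Aux

variable {F : Type*} [Field F] {F' : Type*} [Field F'] [Algebra F F']

section Class

variable (B : Module.Basis (Fin 2) F F') (σ : F' ≃ₐ[F] F')

lemma eq_iota_of_fix (g : GL (Fin 2) F) (h : glMap F F' g • P0 B = P0 B) :
    ∃ x : F'ˣ, g = iota B x := by
  rw [P0, P1.smul_mk, Projectivization.mk_eq_mk_iff] at h
  obtain ⟨a, ha⟩ := h
  set f : F' →ₗ[F] F' := Matrix.toLin B B ((g : Matrix (Fin 2) (Fin 2) F))ᵀ with hf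
  have hTT : TT B f = (g : Matrix (Fin 2) (Fin 2) F) := by
    rw [TT, hf, LinearMap.toMatrix_toLin, Matrix.transpose_transpose]
  have happ : ∀ i, f (B i) = (a : F') * B i := by
    intro i
    have h1 := congrFun (TT_mulVec B f) i
    rw [hTT] at h1
    have h2 := congrFun ha i
    simp only [Pi.smul_apply, Units.smul_def, smul_eq_mul] at h2
    rw [← h1, ← glMap_coe, h2]
  have hf2 : f = (mulE (F := F) a).toLinearMap := B.ext fun i => by
    rw [happ i]
    rfl
  refine ⟨a, Units.ext ?_⟩
  show (g : Matrix (Fin 2) (Fin 2) F) = TT B (mulE (F := F) a).toLinearMap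
  rw [← hf2, hTT]

lemma iota_mem_N' (x : F'ˣ) : iota B x ∈ N'sub F F' σ (P0 B) := by
  rw [mem_N'_iff]
  refine Or.inl ⟨iota_smul B x, ?_⟩
  exact smul_sigma_comm σ (iota B x) _ _ _ _ _ (sigma_basis_ne_zero B σ) (iota_smul B x)

lemma sU_smul_P0 : glMap F F' (sU B σ) • P0 B = Q0 B σ := sU_smul B σ

lemma sU_smul_Q0 (hss : ∀ x, σ (σ x) = x) : glMap F F' (sU B σ) • Q0 B σ = P0 B := by
  have h2 := smul_sigma_comm σ (sU B σ) _ _ (basis_fun_ne_zero B) (sigma_basis_ne_zero B σ)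
    (sigma_basis_ne_zero B σ) (by
      intro h
      have := congrFun h 1
      simp only [Pi.zero_apply] at this
      exact B.ne_zero 1 (σ.injective (σ.injective (by simpa using this))))
    (sU_smul_P0 B σ)
  refine h2.trans ?_
  rw [P0, Projectivization.mk_eq_mk_iff]
  exact ⟨1, funext fun i => by simp [hss]⟩

lemma sU_mem_N' (hss : ∀ x, σ (σ x) = x) : sU B σ ∈ N'sub F F' σ (P0 B) := by
  rw [mem_N'_iff]
  exact Or.inr ⟨sU_smul_P0 B σ, sU_smul_Q0 B σ hss⟩

lemma sU_inv (hss : ∀ x, σ (σ x) = x) : (sU B σ)⁻¹ = sU B σ :=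
  inv_eq_of_mul_eq_one_left (sU_sq B σ hss)

lemma eq_sU_iota_of_swap (hss : ∀ x, σ (σ x) = x) (g : GL (Fin 2) F)
    (h : glMap F F' g • P0 B = Q0 B σ) : ∃ x : F'ˣ, g = sU B σ * iota B x := by
  have h1 : glMap F F' (sU B σ * g) • P0 B = P0 B := by
    rw [_root_.map_mul, mul_smul, h]
    exact sU_smul_Q0 B σ hss
  obtain ⟨x, hx⟩ := eq_iota_of_fix B (sU B σ * g) h1
  refine ⟨x, ?_⟩
  have h2 : g = (sU B σ)⁻¹ * iota B x := eq_inv_mul_iff_mul_eq.2 hx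
  rwa [sU_inv B σ hss] at h2

end Class

end Statement14Aux
namespace Statement14Aux

lemma sq_sub_one (q : ℕ) (hq : 2 ≤ q) : q ^ 2 - 1 = (q + 1) * (q - 1) := by
  obtain ⟨m, rfl⟩ := Nat.exists_eq_add_of_le hq
  have h : (2 + m) ^ 2 = m * m + 4 * m + 4 := by ring
  have h2 : (2 + m + 1) * (2 + m - 1) = m * m + 4 * m + 3 := by
    have : 2 + m - 1 = m + 1 := by omega
    rw [this]
    ring
  omega

variable {F : Type*} [Field F] {F' : Type*} [Field F'] [Algebra F F']
variable [Fintype F] [Fintype F']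

/-- The units of `F` inside `F'ˣ`. -/
def Asub : Subgroup F'ˣ := (Units.map (algebraMap F F').toMonoidHom).range

lemma card_Asub : Nat.card (Asub (F := F) (F' := F')) = Fintype.card F - 1 := by
  classical
  have hinj : Function.Injective (Units.map (algebraMap F F').toMonoidHom) :=
    Units.map_injective (algebraMap F F').injective
  have := Nat.card_congr (MonoidHom.ofInjective hinj).toEquiv
  rw [Asub, ← this]
  rw [Nat.card_eq_fintype_card, Fintype.card_units]

lemma Asub_eq_ker :
    Asub (F := F) (F' := F')
      = (powMonoidHom (Fintype.card F - 1) : F'ˣ →* F'ˣ).ker := by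
  classical
  have hq : 2 ≤ Fintype.card F := Fintype.one_lt_card
  have hle : Asub (F := F) (F' := F')
      ≤ (powMonoidHom (Fintype.card F - 1) : F'ˣ →* F'ˣ).ker := by
    rintro a ⟨c, rfl⟩
    rw [MonoidHom.mem_ker, powMonoidHom_apply, ← map_pow]
    have : c ^ (Fintype.card F - 1) = 1 := by
      rw [← Fintype.card_units (α := F)]
      exact pow_card_eq_one
    rw [this, _root_.map_one]
  refine Subgroup.eq_of_le_of_card_ge hle ?_
  rw [card_Asub]
  have hfin : Nat.card ((powMonoidHom (Fintype.card F - 1) : F'ˣ →* F'ˣ).ker)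
      ≤ Fintype.card F - 1 := by
    rw [Nat.card_eq_fintype_card]
    have h1 : Fintype.card ((powMonoidHom (Fintype.card F - 1) : F'ˣ →* F'ˣ).ker)
        = (Finset.univ.filter fun g : F'ˣ => g ^ (Fintype.card F - 1) = 1).card := by
      rw [← Fintype.card_subtype]
      apply Fintype.card_congr
      apply Equiv.subtypeEquivRight
      intro x
      rw [MonoidHom.mem_ker, powMonoidHom_apply]
    rw [h1]
    calc (Finset.univ.filter fun g : F'ˣ => g ^ (Fintype.card F - 1) = 1).card
        ≤ Multiset.card (Polynomial.nthRoots (Fintype.card F - 1) ((Units.coeHom F') 1)) :=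
          card_nthRoots_subgroup_units (Units.coeHom F') (fun _ _ h => Units.ext h) (by omega) 1
      _ ≤ Fintype.card F - 1 := Polynomial.card_nthRoots _ _
  exact hfin

lemma pow_mem_Asub_iff (ζ : F'ˣ) (hζ : orderOf ζ = Fintype.card F ^ 2 - 1) (k : ℕ) :
    ζ ^ k ∈ Asub (F := F) (F' := F') ↔ (Fintype.card F + 1) ∣ k := by
  have hq : 2 ≤ Fintype.card F := Fintype.one_lt_card
  rw [Asub_eq_ker, MonoidHom.mem_ker, powMonoidHom_apply, ← pow_mul,
    ← orderOf_dvd_iff_pow_eq_one, hζ, sq_sub_one _ hq]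
  rw [Nat.mul_dvd_mul_iff_right (by omega : 0 < Fintype.card F - 1)]

end Statement14Aux
namespace Statement14Aux

variable {F : Type*} [Field F] {F' : Type*} [Field F'] [Algebra F F']

lemma mem_Asub_iff_coe (x : F'ˣ) :
    x ∈ Asub (F := F) (F' := F') ↔ (x : F') ∈ Set.range (algebraMap F F') := by
  constructor
  · rintro ⟨c, rfl⟩
    exact ⟨c, by simp⟩
  · rintro ⟨d, hd⟩
    have hd0 : d ≠ 0 := by
      rintro rfl
      exact x.ne_zero (by simp [← hd])
    exact ⟨Units.mk0 d hd0, Units.ext (by simpa using hd)⟩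

end Statement14Aux
namespace Statement14Aux

section Dihedral

variable {Q : Type*} [Group Q] (g sb : Q) {n : ℕ} [NeZero n]

lemma dGdvd (hord : orderOf g = n) (k : ℕ) (h : n ∣ k) : g ^ k = 1 :=
  orderOf_dvd_iff_pow_eq_one.1 (hord ▸ h)

lemma dGadd (hord : orderOf g = n) (i j : ZMod n) :
    g ^ (i + j).val = g ^ i.val * g ^ j.val := by
  subst hord
  rw [ZMod.val_add, pow_mod_orderOf, pow_add]

lemma dGneg (hord : orderOf g = n) (i : ZMod n) : g ^ (-i).val = (g ^ i.val)⁻¹ := by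
  refine eq_inv_of_mul_eq_one_left ?_
  rw [← pow_add]
  refine dGdvd g hord _ ?_
  have h := ZMod.val_add (-i) i
  rw [neg_add_cancel, ZMod.val_zero] at h
  exact Nat.dvd_of_mod_eq_zero h.symm

lemma dGsub (hord : orderOf g = n) (i j : ZMod n) :
    g ^ (j - i).val = g ^ j.val * (g ^ i.val)⁻¹ := by
  rw [sub_eq_add_neg, dGadd g hord, dGneg g hord]

lemma dconjk (hsb : sb * sb = 1) (hconj : sb * g * sb = g⁻¹) (k : ℕ) :
    sb * g ^ k * sb = (g ^ k)⁻¹ := by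
  have hsbi : sb⁻¹ = sb := inv_eq_of_mul_eq_one_left hsb
  calc sb * g ^ k * sb = sb * g ^ k * sb⁻¹ := by rw [hsbi]
    _ = (sb * g * sb⁻¹) ^ k := (conj_pow).symm
    _ = (g⁻¹) ^ k := by rw [hsbi, hconj]
    _ = (g ^ k)⁻¹ := (inv_pow g k)

lemma dcomm (hsb : sb * sb = 1) (hconj : sb * g * sb = g⁻¹) (k : ℕ) :
    g ^ k * sb = sb * (g ^ k)⁻¹ := by
  have h := dconjk g sb hsb hconj k
  calc g ^ k * sb = sb * (sb * g ^ k * sb) := by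
        rw [← mul_assoc, ← mul_assoc, hsb, one_mul]
    _ = sb * (g ^ k)⁻¹ := by rw [h]

/-- Given elements `g, sb` of a group `Q` satisfying the dihedral relations, the induced
homomorphism from the dihedral group. -/
def dihedralHom (hord : orderOf g = n) (hsb : sb * sb = 1) (hconj : sb * g * sb = g⁻¹) :
    DihedralGroup n →* Q where
  toFun x := match x with
    | .r i => g ^ i.val
    | .sr i => sb * g ^ i.val
  map_one' := by
    show g ^ (0 : ZMod n).val = 1
    rw [ZMod.val_zero, pow_zero]
  map_mul' x y := by
    have hcp : ∀ a b : ℕ, Commute (g ^ a) (g ^ b) := fun a b => (Commute.refl g).pow_pow a b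
    rcases x with i | i <;> rcases y with j | j
    · show g ^ (i + j).val = g ^ i.val * g ^ j.val
      exact dGadd g hord i j
    · show sb * g ^ (j - i).val = g ^ i.val * (sb * g ^ j.val)
      calc sb * g ^ (j - i).val = sb * (g ^ j.val * (g ^ i.val)⁻¹) := by rw [dGsub g hord]
        _ = sb * ((g ^ i.val)⁻¹ * g ^ j.val) :=
          congrArg (fun z => sb * z) ((hcp i.val j.val).inv_left.eq).symm
        _ = (sb * (g ^ i.val)⁻¹) * g ^ j.val := by rw [mul_assoc]
        _ = (g ^ i.val * sb) * g ^ j.val := by rw [dcomm g sb hsb hconj]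
        _ = g ^ i.val * (sb * g ^ j.val) := by rw [mul_assoc]
    · show sb * g ^ (i + j).val = (sb * g ^ i.val) * g ^ j.val
      rw [dGadd g hord, mul_assoc]
    · show g ^ (j - i).val = (sb * g ^ i.val) * (sb * g ^ j.val)
      calc g ^ (j - i).val = g ^ j.val * (g ^ i.val)⁻¹ := dGsub g hord i j
        _ = (g ^ i.val)⁻¹ * g ^ j.val := ((hcp i.val j.val).inv_left.eq).symm
        _ = 1 * ((g ^ i.val)⁻¹ * g ^ j.val) := by rw [one_mul]
        _ = (sb * sb) * ((g ^ i.val)⁻¹ * g ^ j.val) := by rw [hsb]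
        _ = sb * (sb * (g ^ i.val)⁻¹) * g ^ j.val := by group
        _ = sb * (g ^ i.val * sb) * g ^ j.val := by rw [dcomm g sb hsb hconj]
        _ = (sb * g ^ i.val) * (sb * g ^ j.val) := by group

lemma dihedralHom_r (hord : orderOf g = n) (hsb : sb * sb = 1) (hconj : sb * g * sb = g⁻¹)
    (i : ZMod n) : dihedralHom g sb hord hsb hconj (.r i) = g ^ i.val := rfl

lemma dihedralHom_sr (hord : orderOf g = n) (hsb : sb * sb = 1) (hconj : sb * g * sb = g⁻¹)
    (i : ZMod n) : dihedralHom g sb hord hsb hconj (.sr i) = sb * g ^ i.val := rfl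

lemma dihedralHom_injective (hord : orderOf g = n) (hsb : sb * sb = 1)
    (hconj : sb * g * sb = g⁻¹) (hout : ∀ k : ℕ, sb ≠ g ^ k) :
    Function.Injective (dihedralHom g sb hord hsb hconj) := by
  rw [injective_iff_map_eq_one]
  intro x hx
  rcases x with i | i
  · rw [dihedralHom_r] at hx
    have h1 : n ∣ i.val := by
      have h := orderOf_dvd_of_pow_eq_one hx
      rwa [hord] at h
    have h2 : i.val < n := ZMod.val_lt i
    have h3 : i.val = 0 := Nat.eq_zero_of_dvd_of_lt h1 h2
    rw [DihedralGroup.one_def]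
    exact congrArg DihedralGroup.r ((ZMod.val_eq_zero i).1 h3)
  · exfalso
    rw [dihedralHom_sr] at hx
    have h1 : sb = (g ^ i.val)⁻¹ := eq_inv_of_mul_eq_one_left hx
    have hpos : 1 ≤ n := Nat.one_le_iff_ne_zero.2 (NeZero.ne n)
    have hg1 : g ^ (n - 1) * g = 1 := by
      rw [← pow_succ, Nat.sub_add_cancel hpos, ← hord]
      exact pow_orderOf_eq_one g
    have hginv : g⁻¹ = g ^ (n - 1) := inv_eq_of_mul_eq_one_left hg1
    exact hout ((n - 1) * i.val) (by rw [h1, ← inv_pow, hginv, ← pow_mul])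

end Dihedral

end Statement14Aux
set_option maxHeartbeats 1000000 in
/-- The quotient group `N'/F^*` is dihedral of order `2(q+1)`. -/
theorem statement14 {F : Type*} [Field F] [Fintype F] {F' : Type*} [Field F'] [Algebra F F']
    (hdim : Module.finrank F F' = 2)
    (σ : F' ≃ₐ[F] F') (hσ : σ ≠ (AlgEquiv.refl : F' ≃ₐ[F] F'))
    (P : P1 F') (hP : P ∉ ratPts F F') :
    Nonempty
      ((↥(N'sub F F' σ P) ⧸ (scalarSub F).subgroupOf (N'sub F F' σ P))
        ≃* DihedralGroup (Fintype.card F + 1)) := by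
  classical
  obtain ⟨B, hB1, hB0, hPmk⟩ := Statement14Aux.exists_basis hdim P hP
  have hne : σ (B 0) ≠ B 0 := Statement14Aux.sigma_ne_of_ne B σ hB1 hσ
  have hss : ∀ x, σ (σ x) = x := Statement14Aux.sigma_sigma B σ hB1 hne
  letI : Fintype F' := Fintype.ofEquiv (Fin 2 → F) B.equivFun.toEquiv.symm
  have hq : 2 ≤ Fintype.card F := Fintype.one_lt_card
  haveI : NeZero (Fintype.card F + 1) := ⟨by omega⟩
  rw [hPmk]
  show Nonempty
      ((↥(N'sub F F' σ (Statement14Aux.P0 B))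
          ⧸ (scalarSub F).subgroupOf (N'sub F F' σ (Statement14Aux.P0 B)))
        ≃* DihedralGroup (Fintype.card F + 1))
  obtain ⟨ζ, hζgen⟩ := IsCyclic.exists_generator (α := F'ˣ)
  have hcardF' : Fintype.card F' = Fintype.card F ^ 2 := by
    rw [Fintype.card_congr B.equivFun.toEquiv]
    simp [Fintype.card_fun]
  have hord : orderOf ζ = Fintype.card F ^ 2 - 1 := by
    rw [orderOf_eq_card_of_forall_mem_zpowers hζgen, Nat.card_eq_fintype_card, Fintype.card_units, hcardF']
  set π : ↥(N'sub F F' σ (Statement14Aux.P0 B)) →*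
      (↥(N'sub F F' σ (Statement14Aux.P0 B))
        ⧸ (scalarSub F).subgroupOf (N'sub F F' σ (Statement14Aux.P0 B))) :=
    QuotientGroup.mk' ((scalarSub F).subgroupOf (N'sub F F' σ (Statement14Aux.P0 B))) with hπ
  set t : ↥(N'sub F F' σ (Statement14Aux.P0 B)) :=
    ⟨Statement14Aux.iota B ζ, Statement14Aux.iota_mem_N' B σ ζ⟩ with ht
  set s : ↥(N'sub F F' σ (Statement14Aux.P0 B)) :=
    ⟨Statement14Aux.sU B σ, Statement14Aux.sU_mem_N' B σ hss⟩ with hs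
  have hker : ∀ x : ↥(N'sub F F' σ (Statement14Aux.P0 B)),
      π x = 1 ↔ (x : GL (Fin 2) F) ∈ scalarSub F := by
    intro x
    rw [hπ, QuotientGroup.mk'_apply]
    exact (QuotientGroup.eq_one_iff x).trans Subgroup.mem_subgroupOf
  have htpow : ∀ k : ℕ, ((t ^ k :) : GL (Fin 2) F) = Statement14Aux.iota B (ζ ^ k) := by
    intro k
    rw [Subgroup.coe_pow, ht, _root_.map_pow]
  have hgdvd : ∀ k : ℕ, (π t) ^ k = 1 ↔ (Fintype.card F + 1) ∣ k := by
    intro k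
    rw [← _root_.map_pow, hker, htpow, Statement14Aux.iota_mem_scalar_iff B hB1,
      ← Statement14Aux.mem_Asub_iff_coe]
    exact Statement14Aux.pow_mem_Asub_iff ζ hord k
  have hordg : orderOf (π t) = Fintype.card F + 1 := by
    refine Nat.dvd_antisymm ?_ ?_
    · exact orderOf_dvd_iff_pow_eq_one.2 ((hgdvd _).2 dvd_rfl)
    · exact (hgdvd _).1 (pow_orderOf_eq_one _)
  have hsmul : s * s = 1 := Subtype.ext (by
    rw [Subgroup.coe_mul, hs]
    exact Statement14Aux.sU_sq B σ hss)
  have hsb2 : (π s) * (π s) = 1 := by rw [← _root_.map_mul, hsmul, _root_.map_one]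
  have hstst : π ((s * t * s) * t) = 1 := by
    rw [hker]
    have hcoe : (((s * t * s) * t :) : GL (Fin 2) F)
        = Statement14Aux.iota B (Units.map (σ : F' →+* F').toMonoidHom ζ * ζ) := by
      simp only [Subgroup.coe_mul, hs, ht]
      rw [Statement14Aux.sU_conj B σ hss ζ, _root_.map_mul]
    rw [hcoe, Statement14Aux.iota_mem_scalar_iff B hB1]
    refine Statement14Aux.fixed_mem B σ hB1 hne ?_
    rw [Units.val_mul, _root_.map_mul σ]
    simp only [Units.coe_map, RingHom.toMonoidHom_eq_coe, MonoidHom.coe_coe, RingHom.coe_coe]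
    rw [hss]
    exact mul_comm _ _
  have hconj1 : (π s) * (π t) * (π s) = (π t)⁻¹ := by
    have h2 : π (s * t * s) * π t = 1 := by rw [← _root_.map_mul]; exact hstst
    have h3 : π (s * t * s) = (π t)⁻¹ := eq_inv_of_mul_eq_one_left h2
    rw [← h3, _root_.map_mul, _root_.map_mul]
  set Φ := Statement14Aux.dihedralHom (π t) (π s) hordg hsb2 hconj1 with hΦ
  have hout : ∀ k : ℕ, π s ≠ (π t) ^ k := by
    intro k hk
    have h1 : π (s * (t ^ k)⁻¹) = 1 := by
      rw [_root_.map_mul, _root_.map_inv, _root_.map_pow, hk]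
      exact mul_inv_cancel _
    rw [hker] at h1
    obtain ⟨c, hc⟩ := h1
    have hc2 : Statement14Aux.sU B σ
        = Statement14Aux.iota B (Units.map (algebraMap F F').toMonoidHom c * ζ ^ k) := by
      have h4 : ((s * (t ^ k)⁻¹ :) : GL (Fin 2) F)
          = Statement14Aux.sU B σ * (Statement14Aux.iota B (ζ ^ k))⁻¹ := by
        rw [Subgroup.coe_mul, Subgroup.coe_inv, htpow, hs]
      rw [h4] at hc
      rw [_root_.map_mul, Statement14Aux.iota_algebraMap B c, hc]
      group
    have habs := Statement14Aux.iota_smul B (Units.map (algebraMap F F').toMonoidHom c * ζ ^ k)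
    rw [← hc2] at habs
    have habs' : glMap F F' (Statement14Aux.sU B σ) • Statement14Aux.P0 B
        = Statement14Aux.P0 B := habs
    exact Statement14Aux.P0_ne_Q0 B σ hB1 hne
      (((Statement14Aux.sU_smul_P0 B σ).symm.trans habs').symm)
  have hinj : Function.Injective Φ :=
    Statement14Aux.dihedralHom_injective (π t) (π s) hordg hsb2 hconj1 hout
  have hsurj : Function.Surjective Φ := by
    intro x
    obtain ⟨y, rfl⟩ := QuotientGroup.mk'_surjective
      ((scalarSub F).subgroupOf (N'sub F F' σ (Statement14Aux.P0 B))) x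
    have hy := y.2
    rw [Statement14Aux.mem_N'_iff B σ] at hy
    rcases hy with ⟨h1, -⟩ | ⟨h1, -⟩
    · obtain ⟨a, ha⟩ := Statement14Aux.eq_iota_of_fix B (y : GL (Fin 2) F) h1
      obtain ⟨k, hk⟩ : ∃ k : ℕ, ζ ^ k = a := by
        have hmem := hζgen a
        rw [← mem_powers_iff_mem_zpowers] at hmem
        obtain ⟨k, hk⟩ := hmem
        exact ⟨k, hk⟩
      refine ⟨DihedralGroup.r (k : ZMod (Fintype.card F + 1)), ?_⟩
      rw [hΦ, Statement14Aux.dihedralHom_r]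
      have hy_eq : y = t ^ k := Subtype.ext (by rw [htpow k, hk, ha])
      rw [ZMod.val_natCast, ← hordg, pow_mod_orderOf, ← _root_.map_pow, ← hy_eq]
    · obtain ⟨a, ha⟩ := Statement14Aux.eq_sU_iota_of_swap B σ hss (y : GL (Fin 2) F) h1
      obtain ⟨k, hk⟩ : ∃ k : ℕ, ζ ^ k = a := by
        have hmem := hζgen a
        rw [← mem_powers_iff_mem_zpowers] at hmem
        obtain ⟨k, hk⟩ := hmem
        exact ⟨k, hk⟩
      refine ⟨DihedralGroup.sr (k : ZMod (Fintype.card F + 1)), ?_⟩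
      rw [hΦ, Statement14Aux.dihedralHom_sr]
      have hy_eq : y = s * t ^ k := Subtype.ext (by
        rw [Subgroup.coe_mul, htpow k, hk, hs, ha])
      rw [ZMod.val_natCast, ← hordg, pow_mod_orderOf, ← _root_.map_pow, ← _root_.map_mul, ← hy_eq]
  exact ⟨(MulEquiv.ofBijective Φ ⟨hinj, hsurj⟩).symm⟩

end
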